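/- Let B be a unital C*-algebra, S₁,…,Sₙ ∈ B isometries with Σ_{i=1}^n S_i S_i* = 1 (Cuntz relations), and let p ∈ B be a projection commuting with all S_μ p' S_μ* for projections p' in a fixed commutative subalgebra containing p. Suppose there is K ∈ ℕ with p S_μ p = 0 for all words μ with |μ| > K. Define ρ_k(x) = Σ_{|μ|=k} S_μ x S_μ* and q = (∏_{k=1}^K (1 − ρ_k(p))) p. Then for every nonempty word μ, q S_μ q = 0; consequently, the projections S_μ q S_μ* and S_ν q S_ν* are orthogonal whenever μ ≠ ν. -/

import Mathlib

theorem stmt8 {B : Type*} [NormedRing B] [StarRing B] [CStarRing B]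
    [NormedAlgebra ℂ B] [StarModule ℂ B] [CompleteSpace B]
    (n : ℕ) (hn : 2 ≤ n)
    (S : Fin n → B) (hiso : ∀ i j, star (S i) * S j = if i = j then 1 else 0)
    (hcuntz : ∑ i, S i * star (S i) = 1)
    (Sw : List (Fin n) → B) (hSw : ∀ μ, Sw μ = (μ.map S).prod)
    (p : B) (hp : IsSelfAdjoint p ∧ p * p = p)
    (hcomm : ∀ μ ν : List (Fin n),
      Commute (Sw μ * p * star (Sw μ)) (Sw ν * p * star (Sw ν)))
    (K : ℕ) (hK : ∀ μ : List (Fin n), μ.length > K → p * Sw μ * p = 0)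
    (ρ : ℕ → B)
    (hρ : ∀ k, ρ k = ∑ μ : Fin k → Fin n,
      Sw (List.ofFn μ) * p * star (Sw (List.ofFn μ)))
    (q : B)
    (hq : q = (((List.range K).map (fun k => 1 - ρ (k + 1))).prod) * p) :
    (∀ μ : List (Fin n), μ ≠ [] → q * Sw μ * q = 0) ∧
    (∀ μ ν : List (Fin n), μ ≠ ν →
      (Sw μ * q * star (Sw μ)) * (Sw ν * q * star (Sw ν)) = 0) := by
  obtain ⟨hpsa, hpp⟩ := hp
  have hpsa' : star p = p := hpsa
  -- basic facts about Sw
  have hSw_nil : Sw [] = 1 := by simp [hSw]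
  have hSw_cons : ∀ (i : Fin n) μ, Sw (i :: μ) = S i * Sw μ := by
    intro i μ; simp [hSw]
  have hSw_append : ∀ μ ν, Sw (μ ++ ν) = Sw μ * Sw ν := by
    intro μ ν; simp [hSw]
  -- star (Sw μ) * Sw (μ ++ τ) = Sw τ
  have h1 : ∀ μ τ : List (Fin n), star (Sw μ) * Sw (μ ++ τ) = Sw τ := by
    intro μ
    induction μ with
    | nil => intro τ; simp [hSw_nil]
    | cons i μ ih =>
      intro τ
      rw [List.cons_append, hSw_cons, hSw_cons, star_mul]
      have : star (Sw μ) * star (S i) * (S i * Sw (μ ++ τ))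
          = star (Sw μ) * ((star (S i) * S i) * Sw (μ ++ τ)) := by noncomm_ring
      rw [this, hiso]
      simp [ih τ]
  have hisoW : ∀ μ, star (Sw μ) * Sw μ = 1 := by
    intro μ
    have := h1 μ []
    simpa [hSw_nil] using this
  -- orthogonality when no prefix relation
  have hgen : ∀ μ ν : List (Fin n), ¬ μ <+: ν → ¬ ν <+: μ →
      star (Sw μ) * Sw ν = 0 := by
    intro μ
    induction μ with
    | nil => intro ν h _; exact absurd List.nil_prefix h
    | cons i μ ih =>
      intro ν h h'
      cases ν with
      | nil => exact absurd List.nil_prefix h'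
      | cons j ν' =>
        rw [hSw_cons, hSw_cons, star_mul]
        have key : star (Sw μ) * star (S i) * (S j * Sw ν')
            = star (Sw μ) * ((star (S i) * S j) * Sw ν') := by noncomm_ring
        by_cases hij : i = j
        · subst hij
          rw [key, hiso, if_pos rfl, one_mul]
          exact ih ν' (fun hh => h (List.cons_prefix_cons.2 ⟨rfl, hh⟩))
            (fun hh => h' (List.cons_prefix_cons.2 ⟨rfl, hh⟩))
        · rw [key, hiso, if_neg hij]
          simp
  -- orthogonality for distinct words of equal length
  have horth : ∀ μ ν : List (Fin n), μ.length = ν.length → μ ≠ ν →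
      star (Sw μ) * Sw ν = 0 := by
    intro μ ν hlen hne
    exact hgen μ ν (fun hh => hne (hh.eq_of_length hlen))
      (fun hh => hne (hh.eq_of_length hlen.symm).symm)
  -- facts about E μ := Sw μ * p * star (Sw μ)
  have hE_sa : ∀ μ, star (Sw μ * p * star (Sw μ)) = Sw μ * p * star (Sw μ) := by
    intro μ; simp [star_mul, hpsa', mul_assoc]
  have hE_idem : ∀ μ, (Sw μ * p * star (Sw μ)) * (Sw μ * p * star (Sw μ))
      = Sw μ * p * star (Sw μ) := by
    intro μ
    have : (Sw μ * p * star (Sw μ)) * (Sw μ * p * star (Sw μ))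
        = Sw μ * p * ((star (Sw μ) * Sw μ) * (p * star (Sw μ))) := by noncomm_ring
    rw [this, hisoW]
    have : Sw μ * p * (1 * (p * star (Sw μ))) = Sw μ * (p * p) * star (Sw μ) := by
      noncomm_ring
    rw [this, hpp]
  have hE_orth : ∀ μ ν : List (Fin n), μ.length = ν.length → μ ≠ ν →
      (Sw μ * p * star (Sw μ)) * (Sw ν * p * star (Sw ν)) = 0 := by
    intro μ ν hlen hne
    have : (Sw μ * p * star (Sw μ)) * (Sw ν * p * star (Sw ν))
        = Sw μ * p * ((star (Sw μ) * Sw ν) * (p * star (Sw ν))) := by noncomm_ring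
    rw [this, horth μ ν hlen hne]
    simp
  -- ρ facts
  have hE_eq_p : Sw [] * p * star (Sw []) = p := by simp [hSw_nil]
  have hρ_sa : ∀ k, star (ρ k) = ρ k := by
    intro k
    rw [hρ, star_sum]
    exact Finset.sum_congr rfl fun μ _ => hE_sa _
  have hρ_idem : ∀ k, ρ k * ρ k = ρ k := by
    intro k
    rw [hρ, Finset.sum_mul_sum]
    refine Finset.sum_congr rfl fun μ _ => ?_
    rw [Finset.sum_eq_single μ]
    · exact hE_idem _
    · intro ν _ hne
      refine hE_orth _ _ (by simp) ?_
      intro hh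
      exact hne (List.ofFn_inj.1 hh).symm
    · intro hh; exact absurd (Finset.mem_univ μ) hh
  have hcomm_pρ : ∀ k, Commute p (ρ k) := by
    intro k
    rw [hρ]
    refine Commute.sum_right _ _ _ fun i _ => ?_
    have := hcomm [] (List.ofFn i)
    rwa [hE_eq_p] at this
  have hcomm_ρρ : ∀ j k, Commute (ρ j) (ρ k) := by
    intro j k
    rw [hρ, hρ]
    refine Commute.sum_right _ _ _ fun i _ => ?_
    exact (Commute.sum_left _ _ _ fun i' _ => hcomm _ _)
  -- the product w
  set L : List B := (List.range K).map (fun k => 1 - ρ (k + 1)) with hL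
  set w : B := L.prod with hw
  have hmem_comm_p : ∀ x ∈ L, Commute p x := by
    intro x hx
    rw [hL] at hx
    obtain ⟨k, _, rfl⟩ := List.mem_map.1 hx
    exact ((Commute.one_right p).sub_right (hcomm_pρ (k + 1)))
  have hmem_comm_ρ : ∀ j, ∀ x ∈ L, Commute (ρ j) x := by
    intro j x hx
    rw [hL] at hx
    obtain ⟨k, _, rfl⟩ := List.mem_map.1 hx
    exact ((Commute.one_right _).sub_right (hcomm_ρρ j (k + 1)))
  have hpw : Commute p w := Commute.list_prod_right _ _ hmem_comm_p
  have hρw : ∀ j, Commute (ρ j) w := fun j =>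
    Commute.list_prod_right _ _ (hmem_comm_ρ j)
  -- a list whose product annihilates a
  have hannih : ∀ (l : List B) (a x : B), x ∈ l → x * a = 0 →
      (∀ y ∈ l, Commute a y) → l.prod * a = 0 := by
    intro l
    induction l with
    | nil => intro a x hx; exact absurd hx List.not_mem_nil
    | cons h t ih =>
      intro a x hx hxa hcomm'
      rcases List.mem_cons.1 hx with rfl | hx'
      · have hta : Commute a t.prod :=
          Commute.list_prod_right _ _ fun y hy => hcomm' y (List.mem_cons_of_mem _ hy)
        rw [List.prod_cons, mul_assoc, ← hta.eq, ← mul_assoc, hxa, zero_mul]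
      · rw [List.prod_cons, mul_assoc, ih a x hx' hxa
          (fun y hy => hcomm' y (List.mem_cons_of_mem _ hy)), mul_zero]
  have hwρ : ∀ k, 1 ≤ k → k ≤ K → w * ρ k = 0 := by
    intro k hk1 hkK
    refine hannih L (ρ k) (1 - ρ k) ?_ ?_ (hmem_comm_ρ k)
    · rw [hL]
      refine List.mem_map.2 ⟨k - 1, ?_, by rw [Nat.sub_add_cancel hk1]⟩
      exact List.mem_range.2 (by omega)
    · rw [sub_mul, one_mul, hρ_idem, sub_self]
  have hqρ : ∀ k, 1 ≤ k → k ≤ K → q * ρ k = 0 := by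
    intro k hk1 hkK
    rw [hq, mul_assoc, (hcomm_pρ k).eq, ← mul_assoc, hwρ k hk1 hkK, zero_mul]
  have hρq : ∀ k, 1 ≤ k → k ≤ K → ρ k * q = 0 := by
    intro k hk1 hkK
    rw [hq, ← mul_assoc, (hρw k).eq, hwρ k hk1 hkK, zero_mul]
  have hq_eq : q = p * w := by rw [hq, ← hpw.eq]
  -- ρ (length μ) absorbs Sw μ * p
  have habs : ∀ μ : List (Fin n), ρ μ.length * (Sw μ * p) = Sw μ * p := by
    intro μ
    rw [hρ, Finset.sum_mul]
    rw [Finset.sum_eq_single μ.get]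
    · rw [List.ofFn_get]
      have : Sw μ * p * star (Sw μ) * (Sw μ * p)
          = Sw μ * p * ((star (Sw μ) * Sw μ) * p) := by noncomm_ring
      rw [this, hisoW]
      have : Sw μ * p * (1 * p) = Sw μ * (p * p) := by noncomm_ring
      rw [this, hpp]
    · intro ν _ hne
      have hne' : List.ofFn ν ≠ μ := by
        intro hh
        apply hne
        have hh2 : List.ofFn ν = List.ofFn μ.get := by rw [hh, List.ofFn_get]
        exact List.ofFn_inj.1 hh2
      have : Sw (List.ofFn ν) * p * star (Sw (List.ofFn ν)) * (Sw μ * p)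
          = Sw (List.ofFn ν) * p * ((star (Sw (List.ofFn ν)) * Sw μ) * p) := by
        noncomm_ring
      rw [this, horth _ _ (by simp) hne']
      simp
    · intro hh; exact absurd (Finset.mem_univ _) hh
  -- q * Sw μ * p = 0 for 1 ≤ |μ| ≤ K
  have hqSp : ∀ μ : List (Fin n), μ ≠ [] → μ.length ≤ K → q * Sw μ * p = 0 := by
    intro μ hne hlen
    have h1' : 1 ≤ μ.length := List.length_pos_iff.2 hne
    calc q * Sw μ * p = q * (Sw μ * p) := by rw [mul_assoc]
      _ = q * (ρ μ.length * (Sw μ * p)) := by rw [habs]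
      _ = (q * ρ μ.length) * (Sw μ * p) := by rw [mul_assoc]
      _ = 0 := by rw [hqρ _ h1' hlen, zero_mul]
  -- p * star (Sw μ) * q = 0 for 1 ≤ |μ| ≤ K
  have hpSq : ∀ μ : List (Fin n), μ ≠ [] → μ.length ≤ K →
      p * star (Sw μ) * q = 0 := by
    intro μ hne hlen
    have h1' : 1 ≤ μ.length := List.length_pos_iff.2 hne
    have habs' : p * star (Sw μ) * ρ μ.length = p * star (Sw μ) := by
      have h2 := congrArg star (habs μ)
      simp only [star_mul, hρ_sa, hpsa'] at h2
      exact h2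
    calc p * star (Sw μ) * q = (p * star (Sw μ) * ρ μ.length) * q := by rw [habs']
      _ = (p * star (Sw μ)) * (ρ μ.length * q) := by rw [mul_assoc, mul_assoc]
      _ = 0 := by rw [hρq _ h1' hlen, mul_zero]
  -- Part 1
  have part1 : ∀ μ : List (Fin n), μ ≠ [] → q * Sw μ * q = 0 := by
    intro μ hne
    by_cases hlen : μ.length ≤ K
    · calc q * Sw μ * q = (q * Sw μ * p) * w := by rw [hq_eq]; noncomm_ring
        _ = 0 := by rw [hqSp μ hne hlen, zero_mul]
    · have : q * Sw μ * q = w * (p * Sw μ * p) * w := by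
        nth_rewrite 1 [hq]
        rw [hq_eq]
        noncomm_ring
      rw [this, hK μ (by omega)]
      simp
  -- symmetric version: q * star (Sw μ) * q = 0
  have part1' : ∀ μ : List (Fin n), μ ≠ [] → q * star (Sw μ) * q = 0 := by
    intro μ hne
    by_cases hlen : μ.length ≤ K
    · have e1 : q * star (Sw μ) * q = w * (p * star (Sw μ) * q) := by
        rw [hq]; noncomm_ring
      rw [e1, hpSq μ hne hlen, mul_zero]
    · have hKμ : p * star (Sw μ) * p = 0 := by
        have h2 := congrArg star (hK μ (by omega))
        simp only [star_mul, hpsa', star_zero] at h2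
        rw [mul_assoc]
        exact h2
      have e1 : q * star (Sw μ) * q = w * (p * star (Sw μ) * p) * w := by
        nth_rewrite 1 [hq]
        rw [hq_eq]
        noncomm_ring
      rw [e1, hKμ]
      simp
  refine ⟨part1, ?_⟩
  intro μ ν hne
  by_cases h₁ : μ <+: ν
  · obtain ⟨τ, rfl⟩ := h₁
    have hτ : τ ≠ [] := by rintro rfl; simp at hne
    have : (Sw μ * q * star (Sw μ)) * (Sw (μ ++ τ) * q * star (Sw (μ ++ τ)))
        = Sw μ * (q * (star (Sw μ) * Sw (μ ++ τ)) * q) * star (Sw (μ ++ τ)) := by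
      noncomm_ring
    rw [this, h1 μ τ, part1 τ hτ]
    simp
  · by_cases h₂ : ν <+: μ
    · obtain ⟨τ, rfl⟩ := h₂
      have hτ : τ ≠ [] := by rintro rfl; simp at hne
      have key : star (Sw (ν ++ τ)) * Sw ν = star (Sw τ) := by
        rw [hSw_append, star_mul]
        calc star (Sw τ) * star (Sw ν) * Sw ν
            = star (Sw τ) * (star (Sw ν) * Sw ν) := by rw [mul_assoc]
          _ = star (Sw τ) := by rw [hisoW]; rw [mul_one]
      have : (Sw (ν ++ τ) * q * star (Sw (ν ++ τ))) * (Sw ν * q * star (Sw ν))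
          = Sw (ν ++ τ) * (q * (star (Sw (ν ++ τ)) * Sw ν) * q) * star (Sw ν) := by
        noncomm_ring
      rw [this, key, part1' τ hτ]
      simp
    · have : (Sw μ * q * star (Sw μ)) * (Sw ν * q * star (Sw ν))
          = Sw μ * (q * (star (Sw μ) * Sw ν) * q) * star (Sw ν) := by
        noncomm_ring
      rw [this, hgen μ ν h₁ h₂]
      simp
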